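/- There is a universal constant C>0 such that the following holds. Let K be a Markov kernel on a finite state space U with K(u,u)≥1/2 for every u∈U, reversible with respect to a positive stationary probability distribution ν. For s∈U let w_t(u)=K^t(s,u)/ν(u) be the heat-kernel density from s. Then for every integer k≥1, Σ_{t=0}^{k−1} (Σ_{u,v∈U} ν(u)K(u,v)|w_t(u)−w_t(v)|)² ≤ C·log(1/ν(s)). Consequently there exists 0≤t<k with Σ_{u,v} ν(u)K(u,v)|w_t(u)−w_t(v)| ≤ C·√(log(1/ν(s))/k). -/
import Mathlib

open Finset Real

section
variable {U : Type} [Fintype U] [DecidableEq U]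
variable {K : Matrix U U ℝ} {ν : U → ℝ} {s : U}

/-- heat kernel density -/
noncomputable def wf (K : Matrix U U ℝ) (ν : U → ℝ) (s : U) (t : ℕ) (u : U) : ℝ :=
  (K ^ t) s u / ν u

lemma pow_entry_nonneg (hK0 : ∀ u v, 0 ≤ K u v) (t : ℕ) (u v : U) :
    0 ≤ (K ^ t) u v := by
  induction t generalizing u v with
  | zero => simp [Matrix.one_apply]; split <;> norm_num
  | succ t ih =>
    rw [pow_succ, Matrix.mul_apply]
    exact Finset.sum_nonneg fun x _ => mul_nonneg (ih u x) (hK0 x v)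

lemma pow_rowsum (hKrow : ∀ u, ∑ v, K u v = 1) (t : ℕ) (u : U) :
    ∑ v, (K ^ t) u v = 1 := by
  induction t generalizing u with
  | zero => simp [Matrix.one_apply]
  | succ t ih =>
    simp only [pow_succ, Matrix.mul_apply]
    rw [Finset.sum_comm]
    calc ∑ x, ∑ v, (K ^ t) u x * K x v = ∑ x, (K ^ t) u x * ∑ v, K x v := by
          simp [Finset.mul_sum]
      _ = 1 := by simp only [hKrow, mul_one]; exact ih u

lemma stationary (hrev : ∀ u v, ν u * K u v = ν v * K v u)
    (hKrow : ∀ u, ∑ v, K u v = 1) (v : U) : ∑ u, ν u * K u v = ν v := by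
  calc ∑ u, ν u * K u v = ∑ u, ν v * K v u := by simp only [hrev]
    _ = ν v := by rw [← Finset.mul_sum, hKrow, mul_one]

lemma wf_nonneg (hK0 : ∀ u v, 0 ≤ K u v) (hν : ∀ u, 0 < ν u) (t : ℕ) (u : U) :
    0 ≤ wf K ν s t u :=
  div_nonneg (pow_entry_nonneg hK0 t s u) (hν u).le

lemma wf_rec (hν : ∀ u, 0 < ν u) (hrev : ∀ u v, ν u * K u v = ν v * K v u)
    (t : ℕ) (u : U) :
    wf K ν s (t + 1) u = ∑ v, K u v * wf K ν s t v := by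
  simp only [wf]
  rw [pow_succ, Matrix.mul_apply, Finset.sum_div]
  refine Finset.sum_congr rfl fun v _ => ?_
  have h := hrev u v
  have h1 := (hν u).ne'
  have h2 := (hν v).ne'
  field_simp
  linear_combination (-((K ^ t) s v)) * h

lemma wf_mass (hν : ∀ u, 0 < ν u) (hKrow : ∀ u, ∑ v, K u v = 1) (t : ℕ) :
    ∑ u, ν u * wf K ν s t u = 1 := by
  calc ∑ u, ν u * wf K ν s t u = ∑ u, (K ^ t) s u := by
        refine Finset.sum_congr rfl fun u _ => ?_
        rw [wf, mul_div_cancel₀ _ (hν u).ne']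
    _ = 1 := pow_rowsum hKrow t s

lemma ptwise {a b : ℝ} (ha : 0 ≤ a) (hb : 0 < b) :
    (Real.sqrt a - Real.sqrt b) ^ 2 ≤
      a * Real.log a - b * Real.log b - (Real.log b + 1) * (a - b) := by
  rcases eq_or_lt_of_le ha with h | h
  · subst h
    rw [Real.sqrt_zero]
    have hsb : Real.sqrt b ^ 2 = b := Real.sq_sqrt hb.le
    simp only [Real.log_zero, zero_mul]
    nlinarith [hsb]
  · have hsa : 0 < Real.sqrt a := Real.sqrt_pos.mpr h
    have hsb : 0 < Real.sqrt b := Real.sqrt_pos.mpr hb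
    have h1 : Real.log (Real.sqrt b / Real.sqrt a) ≤ Real.sqrt b / Real.sqrt a - 1 :=
      Real.log_le_sub_one_of_pos (by positivity)
    have h2 : Real.log (Real.sqrt b / Real.sqrt a)
        = Real.log b / 2 - Real.log a / 2 := by
      rw [Real.log_div hsb.ne' hsa.ne', Real.log_sqrt hb.le, Real.log_sqrt h.le]
    have h4 : Real.sqrt a * Real.sqrt a = a := Real.mul_self_sqrt h.le
    have h5 : Real.sqrt b * Real.sqrt b = b := Real.mul_self_sqrt hb.le
    have h7 : a * (Real.sqrt b / Real.sqrt a) = Real.sqrt a * Real.sqrt b := by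
      field_simp
      nlinarith [h4]
    have h1' : Real.log b / 2 - Real.log a / 2 ≤ Real.sqrt b / Real.sqrt a - 1 := h2 ▸ h1
    have h8 := mul_le_mul_of_nonneg_left h1' h.le
    nlinarith [h8, h7, h4, h5]

lemma phi_ge {x : ℝ} (hx : 0 ≤ x) : x - 1 ≤ x * Real.log x := by
  rcases eq_or_lt_of_le hx with h | h
  · subst h; simp
  · have h1 : Real.log x⁻¹ ≤ x⁻¹ - 1 := Real.log_le_sub_one_of_pos (by positivity)
    rw [Real.log_inv] at h1
    have h2 := mul_le_mul_of_nonneg_left h1 h.le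
    have h3 : x * x⁻¹ = 1 := mul_inv_cancel₀ h.ne'
    nlinarith [h2, h3]

lemma per_state {a : U → ℝ} {b : ℝ} {u : U}
    (hK0 : ∀ u v, 0 ≤ K u v) (hKrow : ∀ u, ∑ v, K u v = 1)
    (ha : ∀ v, 0 ≤ a v) (hb : b = ∑ v, K u v * a v) :
    b * Real.log b + ∑ v, K u v * (Real.sqrt (a v) - Real.sqrt b) ^ 2
      ≤ ∑ v, K u v * (a v * Real.log (a v)) := by
  have hb0 : 0 ≤ b := hb ▸ Finset.sum_nonneg fun v _ => mul_nonneg (hK0 u v) (ha v)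
  rcases eq_or_lt_of_le hb0 with h0 | hbpos
  · obtain rfl : b = 0 := h0.symm
    have hz : ∀ v ∈ Finset.univ, K u v * a v = 0 :=
      (Finset.sum_eq_zero_iff_of_nonneg
        (fun v _ => mul_nonneg (hK0 u v) (ha v))).mp hb.symm
    have s1 : ∑ v, K u v * (Real.sqrt (a v) - Real.sqrt 0) ^ 2 = 0 :=
      Finset.sum_eq_zero fun v _ => by
        rw [Real.sqrt_zero, sub_zero, Real.sq_sqrt (ha v)]
        exact hz v (Finset.mem_univ v)
    have s2 : ∑ v, K u v * (a v * Real.log (a v)) = 0 :=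
      Finset.sum_eq_zero fun v _ => by
        rw [show K u v * (a v * Real.log (a v)) = K u v * a v * Real.log (a v) by ring,
          hz v (Finset.mem_univ v), zero_mul]
    rw [s1, s2, zero_mul, add_zero]
  · have key : ∀ v ∈ Finset.univ, K u v * (Real.sqrt (a v) - Real.sqrt b) ^ 2
        ≤ K u v * (a v * Real.log (a v) - b * Real.log b
            - (Real.log b + 1) * (a v - b)) :=
      fun v _ => mul_le_mul_of_nonneg_left (ptwise (ha v) hbpos) (hK0 u v)
    have hsum := Finset.sum_le_sum key
    have e1 : ∀ v, K u v * (a v * Real.log (a v) - b * Real.log b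
        - (Real.log b + 1) * (a v - b))
        = K u v * (a v * Real.log (a v)) - K u v * (b * Real.log b)
          - (Real.log b + 1) * (K u v * a v - K u v * b) := fun v => by ring
    simp only [e1, Finset.sum_sub_distrib] at hsum
    have e2 : ∑ v, K u v * (b * Real.log b) = b * Real.log b := by
      rw [← Finset.sum_mul, hKrow, one_mul]
    have e3 : ∑ v, (Real.log b + 1) * (K u v * a v - K u v * b) = 0 := by
      rw [← Finset.mul_sum, Finset.sum_sub_distrib, ← hb, ← Finset.sum_mul,
        hKrow, one_mul, sub_self, mul_zero]
    rw [e2, e3] at hsum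
    linarith

/-- entropy decay: `Ent(t+1) + G t ≤ Ent t`. -/
lemma ent_decay (hK0 : ∀ u v, 0 ≤ K u v) (hKrow : ∀ u, ∑ v, K u v = 1)
    (hν : ∀ u, 0 < ν u) (hrev : ∀ u v, ν u * K u v = ν v * K v u) (t : ℕ) :
    (∑ u, ν u * (wf K ν s (t + 1) u * Real.log (wf K ν s (t + 1) u)))
      + ∑ u, ∑ v, ν u * K u v *
          (Real.sqrt (wf K ν s t v) - Real.sqrt (wf K ν s (t + 1) u)) ^ 2
      ≤ ∑ u, ν u * (wf K ν s t u * Real.log (wf K ν s t u)) := by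
  have ha : ∀ v, 0 ≤ wf K ν s t v := wf_nonneg hK0 hν t
  have step : ∀ u, ν u * (wf K ν s (t + 1) u * Real.log (wf K ν s (t + 1) u))
      + ∑ v, ν u * K u v *
          (Real.sqrt (wf K ν s t v) - Real.sqrt (wf K ν s (t + 1) u)) ^ 2
      ≤ ν u * ∑ v, K u v * (wf K ν s t v * Real.log (wf K ν s t v)) := by
    intro u
    have := mul_le_mul_of_nonneg_left
      (per_state hK0 hKrow ha (wf_rec hν hrev t u)) (hν u).le
    rw [mul_add, Finset.mul_sum] at this
    have e : ∑ v, ν u * K u v *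
        (Real.sqrt (wf K ν s t v) - Real.sqrt (wf K ν s (t + 1) u)) ^ 2
        = ∑ v, ν u * (K u v *
            (Real.sqrt (wf K ν s t v) - Real.sqrt (wf K ν s (t + 1) u)) ^ 2) :=
      Finset.sum_congr rfl fun v _ => mul_assoc _ _ _
    rw [e]
    exact this
  have step2 := Finset.sum_le_sum fun u (_ : u ∈ Finset.univ) => step u
  rw [Finset.sum_add_distrib] at step2
  have swap : ∑ u, ν u * ∑ v, K u v * (wf K ν s t v * Real.log (wf K ν s t v))
      = ∑ v, ν v * (wf K ν s t v * Real.log (wf K ν s t v)) := by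
    simp only [Finset.mul_sum]
    rw [Finset.sum_comm]
    refine Finset.sum_congr rfl fun v _ => ?_
    calc ∑ u, ν u * (K u v * (wf K ν s t v * Real.log (wf K ν s t v)))
        = (∑ u, ν u * K u v) * (wf K ν s t v * Real.log (wf K ν s t v)) := by
          rw [Finset.sum_mul]; simp only [mul_assoc]
      _ = ν v * (wf K ν s t v * Real.log (wf K ν s t v)) := by
          rw [stationary hrev hKrow]
  rw [swap] at step2
  exact step2

/-- `D t ≤ 6 G t`. -/
lemma D_le_6G (hK0 : ∀ u v, 0 ≤ K u v) (hKrow : ∀ u, ∑ v, K u v = 1)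
    (hlazy : ∀ u, (1 / 2 : ℝ) ≤ K u u) (hν : ∀ u, 0 < ν u) (t : ℕ) :
    ∑ u, ∑ v, ν u * K u v *
        (Real.sqrt (wf K ν s t u) - Real.sqrt (wf K ν s t v)) ^ 2
      ≤ 6 * ∑ u, ∑ v, ν u * K u v *
          (Real.sqrt (wf K ν s t v) - Real.sqrt (wf K ν s (t + 1) u)) ^ 2 := by
  set x : U → ℝ := fun u => Real.sqrt (wf K ν s t u) with hxdef
  set y : U → ℝ := fun u => Real.sqrt (wf K ν s (t + 1) u) with hydef
  set G : ℝ := ∑ u, ∑ v, ν u * K u v * (x v - y u) ^ 2 with hGdef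
  have hG0 : ∀ u v, 0 ≤ ν u * K u v * (x v - y u) ^ 2 := fun u v =>
    mul_nonneg (mul_nonneg (hν u).le (hK0 u v)) (sq_nonneg _)
  -- H ≤ 2 G via laziness
  have hH2G : ∑ u, ν u * (x u - y u) ^ 2 ≤ 2 * G := by
    have h1 : ∀ u ∈ Finset.univ, ν u * (x u - y u) ^ 2
        ≤ 2 * (ν u * K u u * (x u - y u) ^ 2) := by
      intro u _
      have := mul_le_mul_of_nonneg_left (hlazy u)
        (mul_nonneg (hν u).le (sq_nonneg (x u - y u)))
      nlinarith [this]
    have h2 : ∀ u ∈ Finset.univ, ν u * K u u * (x u - y u) ^ 2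
        ≤ ∑ v, ν u * K u v * (x v - y u) ^ 2 :=
      fun u _ => Finset.single_le_sum (fun v _ => hG0 u v) (Finset.mem_univ u)
    calc ∑ u, ν u * (x u - y u) ^ 2
        ≤ ∑ u, 2 * (ν u * K u u * (x u - y u) ^ 2) := Finset.sum_le_sum h1
      _ = 2 * ∑ u, ν u * K u u * (x u - y u) ^ 2 := by rw [Finset.mul_sum]
      _ ≤ 2 * G := by
          rw [hGdef]
          have := Finset.sum_le_sum h2
          linarith
  -- pointwise triangle
  have tri : ∀ u v, ν u * K u v * (x u - x v) ^ 2
      ≤ 2 * (ν u * K u v * (x u - y u) ^ 2) + 2 * (ν u * K u v * (x v - y u) ^ 2) := by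
    intro u v
    have hc : 0 ≤ ν u * K u v := mul_nonneg (hν u).le (hK0 u v)
    nlinarith [mul_le_mul_of_nonneg_left
      (show (x u - x v) ^ 2 ≤ 2 * (x u - y u) ^ 2 + 2 * (x v - y u) ^ 2 by
        nlinarith [sq_nonneg (x u + x v - 2 * y u)]) hc]
  have hDsum : ∑ u, ∑ v, ν u * K u v * (x u - x v) ^ 2
      ≤ ∑ u, ∑ v, (2 * (ν u * K u v * (x u - y u) ^ 2)
          + 2 * (ν u * K u v * (x v - y u) ^ 2)) :=
    Finset.sum_le_sum fun u _ => Finset.sum_le_sum fun v _ => tri u v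
  have split : ∑ u, ∑ v, (2 * (ν u * K u v * (x u - y u) ^ 2)
      + 2 * (ν u * K u v * (x v - y u) ^ 2))
      = 2 * (∑ u, ∑ v, ν u * K u v * (x u - y u) ^ 2) + 2 * G := by
    rw [hGdef]
    simp only [Finset.sum_add_distrib, ← Finset.mul_sum]
  have collapse : ∑ u, ∑ v, ν u * K u v * (x u - y u) ^ 2
      = ∑ u, ν u * (x u - y u) ^ 2 := by
    refine Finset.sum_congr rfl fun u _ => ?_
    calc ∑ v, ν u * K u v * (x u - y u) ^ 2
        = ∑ v, ν u * (x u - y u) ^ 2 * K u v := by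
          refine Finset.sum_congr rfl fun v _ => by ring
      _ = ν u * (x u - y u) ^ 2 * ∑ v, K u v := by rw [← Finset.mul_sum]
      _ = ν u * (x u - y u) ^ 2 := by rw [hKrow, mul_one]
  rw [split, collapse] at hDsum
  linarith

/-- Cauchy–Schwarz: `E t ^ 2 ≤ 4 * D t`. -/
lemma E_sq_le_4D (hK0 : ∀ u v, 0 ≤ K u v) (hKrow : ∀ u, ∑ v, K u v = 1)
    (hν : ∀ u, 0 < ν u) (hνsum : ∑ u, ν u = 1)
    (hrev : ∀ u v, ν u * K u v = ν v * K v u) (t : ℕ) :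
    (∑ u, ∑ v, ν u * K u v * |wf K ν s t u - wf K ν s t v|) ^ 2
      ≤ 4 * ∑ u, ∑ v, ν u * K u v *
          (Real.sqrt (wf K ν s t u) - Real.sqrt (wf K ν s t v)) ^ 2 := by
  have hw : ∀ u, 0 ≤ wf K ν s t u := wf_nonneg hK0 hν t
  set f : U × U → ℝ := fun p => Real.sqrt (ν p.1 * K p.1 p.2) *
    |Real.sqrt (wf K ν s t p.1) - Real.sqrt (wf K ν s t p.2)| with hfdef
  set g : U × U → ℝ := fun p => Real.sqrt (ν p.1 * K p.1 p.2) *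
    (Real.sqrt (wf K ν s t p.1) + Real.sqrt (wf K ν s t p.2)) with hgdef
  have hc : ∀ p : U × U, 0 ≤ ν p.1 * K p.1 p.2 :=
    fun p => mul_nonneg (hν p.1).le (hK0 p.1 p.2)
  have hfg : ∀ p : U × U, f p * g p
      = ν p.1 * K p.1 p.2 * |wf K ν s t p.1 - wf K ν s t p.2| := by
    intro p
    have hxy : 0 ≤ Real.sqrt (wf K ν s t p.1) + Real.sqrt (wf K ν s t p.2) :=
      add_nonneg (Real.sqrt_nonneg _) (Real.sqrt_nonneg _)
    have h1 : |Real.sqrt (wf K ν s t p.1) - Real.sqrt (wf K ν s t p.2)| *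
        (Real.sqrt (wf K ν s t p.1) + Real.sqrt (wf K ν s t p.2))
        = |wf K ν s t p.1 - wf K ν s t p.2| := by
      rw [← abs_of_nonneg hxy, ← abs_mul]
      congr 1
      have e1 : Real.sqrt (wf K ν s t p.1) ^ 2 = wf K ν s t p.1 := Real.sq_sqrt (hw p.1)
      have e2 : Real.sqrt (wf K ν s t p.2) ^ 2 = wf K ν s t p.2 := Real.sq_sqrt (hw p.2)
      linear_combination e1 - e2
    have h2 : Real.sqrt (ν p.1 * K p.1 p.2) * Real.sqrt (ν p.1 * K p.1 p.2)
        = ν p.1 * K p.1 p.2 := Real.mul_self_sqrt (hc p)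
    calc f p * g p = (Real.sqrt (ν p.1 * K p.1 p.2) * Real.sqrt (ν p.1 * K p.1 p.2)) *
          (|Real.sqrt (wf K ν s t p.1) - Real.sqrt (wf K ν s t p.2)| *
            (Real.sqrt (wf K ν s t p.1) + Real.sqrt (wf K ν s t p.2))) := by
          rw [hfdef, hgdef]; ring
      _ = ν p.1 * K p.1 p.2 * |wf K ν s t p.1 - wf K ν s t p.2| := by rw [h1, h2]
  have hf2 : ∀ p : U × U, f p ^ 2 = ν p.1 * K p.1 p.2 *
      (Real.sqrt (wf K ν s t p.1) - Real.sqrt (wf K ν s t p.2)) ^ 2 := by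
    intro p
    rw [hfdef]
    rw [mul_pow, sq_abs, Real.sq_sqrt (hc p)]
  have hg2 : ∀ p : U × U, g p ^ 2 ≤ 2 * (ν p.1 * K p.1 p.2 * wf K ν s t p.1)
      + 2 * (ν p.1 * K p.1 p.2 * wf K ν s t p.2) := by
    intro p
    rw [hgdef]
    rw [mul_pow, Real.sq_sqrt (hc p)]
    have e1 : Real.sqrt (wf K ν s t p.1) ^ 2 = wf K ν s t p.1 := Real.sq_sqrt (hw p.1)
    have e2 : Real.sqrt (wf K ν s t p.2) ^ 2 = wf K ν s t p.2 := Real.sq_sqrt (hw p.2)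
    nlinarith [hc p, sq_nonneg (Real.sqrt (wf K ν s t p.1) - Real.sqrt (wf K ν s t p.2)),
      mul_le_mul_of_nonneg_left (show (Real.sqrt (wf K ν s t p.1) +
        Real.sqrt (wf K ν s t p.2)) ^ 2 ≤ 2 * wf K ν s t p.1 + 2 * wf K ν s t p.2 by
          nlinarith [sq_nonneg (Real.sqrt (wf K ν s t p.1) - Real.sqrt (wf K ν s t p.2))])
        (hc p)]
  -- mass identities
  have m1 : ∑ u, ∑ v, ν u * K u v * wf K ν s t u = 1 := by
    have : ∀ u, ∑ v, ν u * K u v * wf K ν s t u = ν u * wf K ν s t u := by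
      intro u
      calc ∑ v, ν u * K u v * wf K ν s t u
          = ∑ v, ν u * wf K ν s t u * K u v := Finset.sum_congr rfl fun v _ => by ring
        _ = ν u * wf K ν s t u * ∑ v, K u v := by rw [← Finset.mul_sum]
        _ = ν u * wf K ν s t u := by rw [hKrow, mul_one]
    rw [Finset.sum_congr rfl fun u _ => this u]
    exact wf_mass hν hKrow t
  have m2 : ∑ u, ∑ v, ν u * K u v * wf K ν s t v = 1 := by
    rw [Finset.sum_comm]
    have : ∀ v, ∑ u, ν u * K u v * wf K ν s t v = ν v * wf K ν s t v := by
      intro v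
      rw [← Finset.sum_mul, stationary hrev hKrow]
    rw [Finset.sum_congr rfl fun v _ => this v]
    exact wf_mass hν hKrow t
  have e0 : ∑ p : U × U, f p * g p
      = ∑ u, ∑ v, ν u * K u v * |wf K ν s t u - wf K ν s t v| := by
    rw [Fintype.sum_prod_type]
    exact Finset.sum_congr rfl fun u _ => Finset.sum_congr rfl fun v _ => hfg (u, v)
  have e1 : ∑ p : U × U, f p ^ 2
      = ∑ u, ∑ v, ν u * K u v *
          (Real.sqrt (wf K ν s t u) - Real.sqrt (wf K ν s t v)) ^ 2 := by
    rw [Fintype.sum_prod_type]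
    exact Finset.sum_congr rfl fun u _ => Finset.sum_congr rfl fun v _ => hf2 (u, v)
  have e2 : ∑ p : U × U, g p ^ 2 ≤ 4 := by
    calc ∑ p : U × U, g p ^ 2
        ≤ ∑ p : U × U, (2 * (ν p.1 * K p.1 p.2 * wf K ν s t p.1)
            + 2 * (ν p.1 * K p.1 p.2 * wf K ν s t p.2)) :=
          Finset.sum_le_sum fun p _ => hg2 p
      _ = 2 * (∑ u, ∑ v, ν u * K u v * wf K ν s t u)
            + 2 * (∑ u, ∑ v, ν u * K u v * wf K ν s t v) := by
          rw [Finset.sum_add_distrib]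
          rw [← Finset.mul_sum, ← Finset.mul_sum]
          rw [Fintype.sum_prod_type, Fintype.sum_prod_type]
      _ = 4 := by rw [m1, m2]; norm_num
  have cs := Finset.sum_mul_sq_le_sq_mul_sq Finset.univ f g
  rw [e0, e1] at cs
  have hD0 : 0 ≤ ∑ u, ∑ v, ν u * K u v *
      (Real.sqrt (wf K ν s t u) - Real.sqrt (wf K ν s t v)) ^ 2 :=
    Finset.sum_nonneg fun u _ => Finset.sum_nonneg fun v _ =>
      mul_nonneg (mul_nonneg (hν u).le (hK0 u v)) (sq_nonneg _)
  calc (∑ u, ∑ v, ν u * K u v * |wf K ν s t u - wf K ν s t v|) ^ 2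
      ≤ (∑ u, ∑ v, ν u * K u v *
          (Real.sqrt (wf K ν s t u) - Real.sqrt (wf K ν s t v)) ^ 2)
        * ∑ p : U × U, g p ^ 2 := cs
    _ ≤ (∑ u, ∑ v, ν u * K u v *
          (Real.sqrt (wf K ν s t u) - Real.sqrt (wf K ν s t v)) ^ 2) * 4 :=
        mul_le_mul_of_nonneg_left e2 hD0
    _ = 4 * ∑ u, ∑ v, ν u * K u v *
          (Real.sqrt (wf K ν s t u) - Real.sqrt (wf K ν s t v)) ^ 2 := by ring

lemma ent_zero (hν : ∀ u, 0 < ν u) :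
    ∑ u, ν u * (wf K ν s 0 u * Real.log (wf K ν s 0 u)) = Real.log (1 / ν s) := by
  rw [Finset.sum_eq_single_of_mem s (Finset.mem_univ s)]
  · have h0 : wf K ν s 0 s = 1 / ν s := by
      rw [wf, pow_zero, Matrix.one_apply_eq]
    rw [h0]
    rw [one_div, ← mul_assoc, mul_inv_cancel₀ (hν s).ne', one_mul]
  · intro u _ hus
    have h0 : wf K ν s 0 u = 0 := by
      rw [wf, pow_zero, Matrix.one_apply_ne (Ne.symm hus), zero_div]
    rw [h0]
    simp

lemma ent_nonneg (hK0 : ∀ u v, 0 ≤ K u v) (hKrow : ∀ u, ∑ v, K u v = 1)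
    (hν : ∀ u, 0 < ν u) (hνsum : ∑ u, ν u = 1) (t : ℕ) :
    0 ≤ ∑ u, ν u * (wf K ν s t u * Real.log (wf K ν s t u)) := by
  have h1 : ∀ u ∈ Finset.univ, ν u * (wf K ν s t u - 1)
      ≤ ν u * (wf K ν s t u * Real.log (wf K ν s t u)) :=
    fun u _ => mul_le_mul_of_nonneg_left (phi_ge (wf_nonneg hK0 hν t u)) (hν u).le
  have h2 := Finset.sum_le_sum h1
  have h3 : ∑ u, ν u * (wf K ν s t u - 1) = 0 := by
    have : ∀ u, ν u * (wf K ν s t u - 1) = ν u * wf K ν s t u - ν u := fun u => by ring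
    simp only [this, Finset.sum_sub_distrib]
    rw [wf_mass hν hKrow t, hνsum, sub_self]
  linarith

lemma log_nonneg' (hν : ∀ u, 0 < ν u) (hνsum : ∑ u, ν u = 1) :
    0 ≤ Real.log (1 / ν s) := by
  have hle : ν s ≤ 1 := by
    rw [← hνsum]
    exact Finset.single_le_sum (fun u _ => (hν u).le) (Finset.mem_univ s)
  apply Real.log_nonneg
  rw [le_div_iff₀ (hν s), one_mul]
  exact hle

lemma main_lemma (hK0 : ∀ u v, 0 ≤ K u v) (hKrow : ∀ u, ∑ v, K u v = 1)
    (hlazy : ∀ u, (1 / 2 : ℝ) ≤ K u u) (hν : ∀ u, 0 < ν u) (hνsum : ∑ u, ν u = 1)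
    (hrev : ∀ u v, ν u * K u v = ν v * K v u) {k : ℕ} (hk : 1 ≤ k) :
    (∑ t ∈ Finset.range k,
        (∑ u, ∑ v, ν u * K u v * |wf K ν s t u - wf K ν s t v|) ^ 2)
        ≤ 24 * Real.log (1 / ν s) ∧
    ∃ t < k, (∑ u, ∑ v, ν u * K u v * |wf K ν s t u - wf K ν s t v|)
        ≤ 24 * Real.sqrt (Real.log (1 / ν s) / k) := by
  have key : ∀ t, (∑ u, ∑ v, ν u * K u v * |wf K ν s t u - wf K ν s t v|) ^ 2
      ≤ 24 * ((∑ u, ν u * (wf K ν s t u * Real.log (wf K ν s t u)))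
        - ∑ u, ν u * (wf K ν s (t + 1) u * Real.log (wf K ν s (t + 1) u))) := by
    intro t
    have h1 := E_sq_le_4D (s := s) hK0 hKrow hν hνsum hrev t
    have h2 := D_le_6G (s := s) hK0 hKrow hlazy hν t
    have h3 := ent_decay (s := s) hK0 hKrow hν hrev t
    linarith
  have part1 : (∑ t ∈ Finset.range k,
      (∑ u, ∑ v, ν u * K u v * |wf K ν s t u - wf K ν s t v|) ^ 2)
      ≤ 24 * Real.log (1 / ν s) := by
    have tele : ∑ t ∈ Finset.range k,
        ((∑ u, ν u * (wf K ν s t u * Real.log (wf K ν s t u)))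
          - ∑ u, ν u * (wf K ν s (t + 1) u * Real.log (wf K ν s (t + 1) u)))
        = (∑ u, ν u * (wf K ν s 0 u * Real.log (wf K ν s 0 u)))
          - ∑ u, ν u * (wf K ν s k u * Real.log (wf K ν s k u)) :=
      Finset.sum_range_sub' _ k
    calc ∑ t ∈ Finset.range k,
        (∑ u, ∑ v, ν u * K u v * |wf K ν s t u - wf K ν s t v|) ^ 2
        ≤ ∑ t ∈ Finset.range k,
          24 * ((∑ u, ν u * (wf K ν s t u * Real.log (wf K ν s t u)))
            - ∑ u, ν u * (wf K ν s (t + 1) u * Real.log (wf K ν s (t + 1) u))) :=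
          Finset.sum_le_sum fun t _ => key t
      _ = 24 * ((∑ u, ν u * (wf K ν s 0 u * Real.log (wf K ν s 0 u)))
            - ∑ u, ν u * (wf K ν s k u * Real.log (wf K ν s k u))) := by
          rw [← Finset.mul_sum, tele]
      _ ≤ 24 * Real.log (1 / ν s) := by
          have h0 := ent_zero (K := K) (s := s) hν
          have hk0 := ent_nonneg (K := K) (s := s) hK0 hKrow hν hνsum k
          nlinarith [h0, hk0]
  refine ⟨part1, ?_⟩
  by_contra hcon
  push_neg at hcon
  have hL : 0 ≤ Real.log (1 / ν s) := log_nonneg' hν hνsum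
  have hLk : 0 ≤ Real.log (1 / ν s) / (k : ℝ) := by positivity
  have hsq : Real.sqrt (Real.log (1 / ν s) / k) ^ 2 = Real.log (1 / ν s) / k :=
    Real.sq_sqrt hLk
  have hlow : ∀ t ∈ Finset.range k,
      576 * (Real.log (1 / ν s) / k)
        < (∑ u, ∑ v, ν u * K u v * |wf K ν s t u - wf K ν s t v|) ^ 2 := by
    intro t ht
    have h1 := hcon t (Finset.mem_range.mp ht)
    have h2 : 0 ≤ 24 * Real.sqrt (Real.log (1 / ν s) / k) := by positivity
    nlinarith [h1, h2, hsq]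
  have hne : (Finset.range k).Nonempty := Finset.nonempty_range_iff.mpr (by omega)
  have hsumlow := Finset.sum_lt_sum_of_nonempty hne hlow
  rw [Finset.sum_const, Finset.card_range, nsmul_eq_mul] at hsumlow
  have hkpos : (0 : ℝ) < k := by positivity
  have hkk : (k : ℝ) * (576 * (Real.log (1 / ν s) / k)) = 576 * Real.log (1 / ν s) := by
    field_simp
  rw [hkk] at hsumlow
  nlinarith [hsumlow, part1, hL]

end

/-- Heat-kernel `L¹`-gradient averaging: there is a universal `C > 0` such that, for every lazy
reversible Markov kernel `K` on a finite state space with positive stationary distribution `ν`,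
the heat-kernel densities `w_t(u) = K^t(s,u)/ν(u)` satisfy
`Σ_{t<k} (Σ_{u,v} ν(u)K(u,v)|w_t(u)−w_t(v)|)² ≤ C log(1/ν(s))`, and consequently some `t < k`
has `Σ_{u,v} ν(u)K(u,v)|w_t(u)−w_t(v)| ≤ C √(log(1/ν(s))/k)`. -/
theorem stmt1 :
    ∃ C > (0 : ℝ),
      ∀ (U : Type) [Fintype U] [DecidableEq U],
      ∀ (K : Matrix U U ℝ) (ν : U → ℝ) (s : U) (k : ℕ),
        (∀ u v, 0 ≤ K u v) → (∀ u, ∑ v, K u v = 1) → (∀ u, (1 / 2 : ℝ) ≤ K u u) →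
        (∀ u, 0 < ν u) → (∑ u, ν u = 1) →
        (∀ u v, ν u * K u v = ν v * K v u) →
        1 ≤ k →
        (∑ t ∈ Finset.range k,
            (∑ u, ∑ v, ν u * K u v * |(K ^ t) s u / ν u - (K ^ t) s v / ν v|) ^ 2)
            ≤ C * Real.log (1 / ν s) ∧
        ∃ t < k,
          (∑ u, ∑ v, ν u * K u v * |(K ^ t) s u / ν u - (K ^ t) s v / ν v|)
            ≤ C * Real.sqrt (Real.log (1 / ν s) / k) := by
  refine ⟨24, by norm_num, ?_⟩
  intro U _ _ K ν s k hK0 hKrow hlazy hν hνsum hrev hk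
  simpa only [wf] using
    main_lemma (K := K) (ν := ν) (s := s) hK0 hKrow hlazy hν hνsum hrev hk
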